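/- arXiv:1101.1015 — 2 statements merged into one kernel-verified Lean document; each statement's English description precedes it below -/
import Mathlib

section
/- All six eigenvalues of the 6×6 matrix H(g,h;z) are real if and only if 16γ² + 4z² ≤ 21 and 16δ² + 4z² ≤ 5, where γ = (g+h)/2 and δ = (g-h)/2. -/
open Matrix

set_option maxRecDepth 100000
set_option maxHeartbeats 4000000


private lemma cons_val_five' {α : Type*} {m : ℕ} (x : α) (u : Fin m.succ.succ.succ.succ.succ → α) :
    Matrix.vecCons x u 5 = Matrix.vecHead (Matrix.vecTail (Matrix.vecTail (Matrix.vecTail (Matrix.vecTail u)))) :=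
  rfl

private lemma sq_real_im {a : ℝ} {w : ℂ} (ha : 0 ≤ a) (hw : w ^ 2 = (a : ℂ)) :
    w.im = 0 := by
  have h1 : (w ^ 2).im = 0 := by rw [hw]; simp
  have h2 : (w ^ 2).re = a := by rw [hw]; simp
  simp [pow_two, Complex.mul_im, Complex.mul_re] at h1 h2
  by_contra hne
  have hre : w.re = 0 := by
    rcases mul_eq_zero.mp (by linarith : w.re * w.im = 0) with h | h
    · exact h
    · exact absurd h hne
  nlinarith [mul_self_nonneg w.im, mul_self_pos.mpr hne]

theorem stmt5 (g h z : ℝ) :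
    let γ : ℝ := (g + h)/2
    let δ : ℝ := (g - h)/2
    let H : Matrix (Fin 6) (Fin 6) ℝ :=
      !![2, -1-z, 0, 0, 0, 0;
         -1+z, 3, -1-g, -1-h, 0, 0;
         0, -1+g, 2, 0, -1+h, 0;
         0, -1+h, 0, 2, -1+g, 0;
         0, 0, -1-h, -1-g, 3, -1+z;
         0, 0, 0, 0, -1-z, 2]
    ((∀ μ : ℂ, μ ∈ spectrum ℂ (H.map Complex.ofReal) → μ.im = 0) ↔
      (16*γ^2 + 4*z^2 ≤ 21 ∧ 16*δ^2 + 4*z^2 ≤ 5)) := by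
  intro γ δ H
  set A : ℝ := 21 - 4*(g+h)^2 - 4*z^2 with hA
  set B : ℝ := 5 - 4*(g-h)^2 - 4*z^2 with hB
  have hspec : ∀ μ : ℂ, μ ∈ spectrum ℂ (H.map Complex.ofReal) ↔
      (μ-2)^2 * ((2*μ-5)^2 - (A:ℂ)) * ((2*μ-5)^2 - (B:ℂ)) = 0 := by
    intro μ
    rw [spectrum.mem_iff, Matrix.isUnit_iff_isUnit_det, isUnit_iff_ne_zero, not_ne_iff]
    have hM : (algebraMap ℂ (Matrix (Fin 6) (Fin 6) ℂ)) μ - H.map Complex.ofReal =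
        !![μ-2, 1+z, 0,0,0,0;
           1-z, μ-3, 1+g, 1+h, 0,0;
           0, 1-g, μ-2, 0, 1-h, 0;
           0, 1-h, 0, μ-2, 1-g, 0;
           0,0,1+h,1+g, μ-3, 1-z;
           0,0,0,0,1+z, μ-2] := by
      ext i j
      fin_cases i <;> fin_cases j <;>
        simp [H, Matrix.algebraMap_matrix_apply, cons_val_five', Matrix.vecHead, Matrix.vecTail] <;> push_cast <;> ring
    have hdet : ((algebraMap ℂ (Matrix (Fin 6) (Fin 6) ℂ)) μ - H.map Complex.ofReal).det =
        (μ-2)^2 * ((2*μ-5)^2 - (A:ℂ)) * ((2*μ-5)^2 - (B:ℂ)) / 16 := by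
      rw [hM]
      simp [Matrix.det_succ_row_zero, Fin.sum_univ_succ, Fin.succAbove, Fin.ext_iff,
        hA, hB]
      push_cast
      ring
    rw [hdet]
    constructor
    · intro h16
      field_simp at h16
      linear_combination h16
    · intro h16
      rw [h16]; simp
  have hAiff : 16*γ^2 + 4*z^2 ≤ 21 ↔ 0 ≤ A := by
    simp only [γ, hA]; constructor <;> intro <;> nlinarith
  have hBiff : 16*δ^2 + 4*z^2 ≤ 5 ↔ 0 ≤ B := by
    simp only [δ, hB]; constructor <;> intro <;> nlinarith
  rw [hAiff, hBiff]
  constructor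
  · intro hall
    constructor
    · by_contra hneg
      push_neg at hneg
      set μ : ℂ := (5 + Complex.I * Real.sqrt (-A)) / 2 with hμ
      have hsq : (2*μ-5)^2 = (A:ℂ) := by
        have : (2*μ-5) = Complex.I * Real.sqrt (-A) := by rw [hμ]; ring
        rw [this, mul_pow, Complex.I_sq]
        rw [← Complex.ofReal_pow, Real.sq_sqrt (by linarith)]
        push_cast; ring
      have hmem : μ ∈ spectrum ℂ (H.map Complex.ofReal) := by
        rw [hspec]
        rw [hsq]; ring
      have him := hall μ hmem
      rw [hμ] at him
      simp [Complex.div_im, Complex.add_im, Complex.mul_im] at him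
      have : Real.sqrt (-A) > 0 := Real.sqrt_pos.mpr (by linarith)
      nlinarith
    · by_contra hneg
      push_neg at hneg
      set μ : ℂ := (5 + Complex.I * Real.sqrt (-B)) / 2 with hμ
      have hsq : (2*μ-5)^2 = (B:ℂ) := by
        have : (2*μ-5) = Complex.I * Real.sqrt (-B) := by rw [hμ]; ring
        rw [this, mul_pow, Complex.I_sq]
        rw [← Complex.ofReal_pow, Real.sq_sqrt (by linarith)]
        push_cast; ring
      have hmem : μ ∈ spectrum ℂ (H.map Complex.ofReal) := by
        rw [hspec]
        rw [hsq]; ring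
      have him := hall μ hmem
      rw [hμ] at him
      simp [Complex.div_im, Complex.add_im, Complex.mul_im] at him
      have : Real.sqrt (-B) > 0 := Real.sqrt_pos.mpr (by linarith)
      nlinarith
  · rintro ⟨hA0, hB0⟩ μ hmem
    rw [hspec] at hmem
    rcases mul_eq_zero.mp hmem with hmem | h3
    · rcases mul_eq_zero.mp hmem with h1 | h2
      · have h2 : μ = 2 := sub_eq_zero.mp (sq_eq_zero_iff.mp h1)
        simp [h2]
      · have hw : (2*μ-5)^2 = (A:ℂ) := by linear_combination h2
        have := sq_real_im hA0 hw
        simpa using this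
    · have hw : (2*μ-5)^2 = (B:ℂ) := by linear_combination h3
      have := sq_real_im hB0 hw
      simpa using this
end

section
/- For every K ≥ 2 and all real g, z with |g| < 1 and |z| < 1, the (2K+2)×(2K+2) loop-graph Hamiltonian H(g,g;z) has entirely real spectrum. -/
noncomputable def ent (K : ℕ) (g z : ℝ) (p q : ℕ) : ℝ :=
  if p = q then (if p = K ∨ p = K+3 then 3 else 2)
  else if p = 1 ∧ q = 2 then -1-z
  else if p = 2 ∧ q = 1 then -1+z
  else if p = 2*K+1 ∧ q = 2*K+2 then -1+z
  else if p = 2*K+2 ∧ q = 2*K+1 then -1-z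
  else if (p = K ∧ q = K+1) ∨ (p = K ∧ q = K+2)
       ∨ (p = K+3 ∧ q = K+1) ∨ (p = K+3 ∧ q = K+2) then -1-g
  else if (p = K+1 ∧ q = K) ∨ (p = K+2 ∧ q = K)
       ∨ (p = K+1 ∧ q = K+3) ∨ (p = K+2 ∧ q = K+3) then -1+g
  else if (q = p+1 ∧ ((2 ≤ p ∧ p ≤ K-1) ∨ (K+3 ≤ p ∧ p ≤ 2*K)))
       ∨ (p = q+1 ∧ ((2 ≤ q ∧ q ≤ K-1) ∨ (K+3 ≤ q ∧ q ≤ 2*K))) then -1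
  else 0

noncomputable def dd (K : ℕ) (g z : ℝ) (p : ℕ) : ℝ :=
  if p = K+1 ∨ p = K+2 then (1+g)*(1+z)
  else if p = 1 ∨ p = 2*K+2 then (1-z)*(1-g)
  else (1-g)*(1+z)

section evals
variable {K : ℕ} {g z : ℝ} {p q : ℕ}

lemma dd1 (h : p = K+1 ∨ p = K+2) : dd K g z p = (1+g)*(1+z) := by
  unfold dd; rw [if_pos h]
lemma dd2 (h1 : ¬(p = K+1 ∨ p = K+2)) (h2 : p = 1 ∨ p = 2*K+2) :
    dd K g z p = (1-z)*(1-g) := by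
  unfold dd; rw [if_neg h1, if_pos h2]
lemma dd3 (h1 : ¬(p = K+1 ∨ p = K+2)) (h2 : ¬(p = 1 ∨ p = 2*K+2)) :
    dd K g z p = (1-g)*(1+z) := by
  unfold dd; rw [if_neg h1, if_neg h2]

lemma ent1 (h0 : ¬ p = q) (h1 : p = 1 ∧ q = 2) : ent K g z p q = -1-z := by
  unfold ent; rw [if_neg h0, if_pos h1]
lemma ent2 (h0 : ¬ p = q) (h1 : ¬(p = 1 ∧ q = 2)) (h2 : p = 2 ∧ q = 1) :
    ent K g z p q = -1+z := by
  unfold ent; rw [if_neg h0, if_neg h1, if_pos h2]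
lemma ent3 (h0 : ¬ p = q) (h1 : ¬(p = 1 ∧ q = 2)) (h2 : ¬(p = 2 ∧ q = 1))
    (h3 : p = 2*K+1 ∧ q = 2*K+2) : ent K g z p q = -1+z := by
  unfold ent; rw [if_neg h0, if_neg h1, if_neg h2, if_pos h3]
lemma ent4 (h0 : ¬ p = q) (h1 : ¬(p = 1 ∧ q = 2)) (h2 : ¬(p = 2 ∧ q = 1))
    (h3 : ¬(p = 2*K+1 ∧ q = 2*K+2)) (h4 : p = 2*K+2 ∧ q = 2*K+1) :
    ent K g z p q = -1-z := by
  unfold ent; rw [if_neg h0, if_neg h1, if_neg h2, if_neg h3, if_pos h4]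
lemma ent5 (h0 : ¬ p = q) (h1 : ¬(p = 1 ∧ q = 2)) (h2 : ¬(p = 2 ∧ q = 1))
    (h3 : ¬(p = 2*K+1 ∧ q = 2*K+2)) (h4 : ¬(p = 2*K+2 ∧ q = 2*K+1))
    (h5 : (p = K ∧ q = K+1) ∨ (p = K ∧ q = K+2)
       ∨ (p = K+3 ∧ q = K+1) ∨ (p = K+3 ∧ q = K+2)) :
    ent K g z p q = -1-g := by
  unfold ent; rw [if_neg h0, if_neg h1, if_neg h2, if_neg h3, if_neg h4, if_pos h5]
lemma ent6 (h0 : ¬ p = q) (h1 : ¬(p = 1 ∧ q = 2)) (h2 : ¬(p = 2 ∧ q = 1))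
    (h3 : ¬(p = 2*K+1 ∧ q = 2*K+2)) (h4 : ¬(p = 2*K+2 ∧ q = 2*K+1))
    (h5 : ¬((p = K ∧ q = K+1) ∨ (p = K ∧ q = K+2)
       ∨ (p = K+3 ∧ q = K+1) ∨ (p = K+3 ∧ q = K+2)))
    (h6 : (p = K+1 ∧ q = K) ∨ (p = K+2 ∧ q = K)
       ∨ (p = K+1 ∧ q = K+3) ∨ (p = K+2 ∧ q = K+3)) :
    ent K g z p q = -1+g := by
  unfold ent
  rw [if_neg h0, if_neg h1, if_neg h2, if_neg h3, if_neg h4, if_neg h5, if_pos h6]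
lemma ent7 (h0 : ¬ p = q) (h1 : ¬(p = 1 ∧ q = 2)) (h2 : ¬(p = 2 ∧ q = 1))
    (h3 : ¬(p = 2*K+1 ∧ q = 2*K+2)) (h4 : ¬(p = 2*K+2 ∧ q = 2*K+1))
    (h5 : ¬((p = K ∧ q = K+1) ∨ (p = K ∧ q = K+2)
       ∨ (p = K+3 ∧ q = K+1) ∨ (p = K+3 ∧ q = K+2)))
    (h6 : ¬((p = K+1 ∧ q = K) ∨ (p = K+2 ∧ q = K)
       ∨ (p = K+1 ∧ q = K+3) ∨ (p = K+2 ∧ q = K+3)))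
    (h7 : (q = p+1 ∧ ((2 ≤ p ∧ p ≤ K-1) ∨ (K+3 ≤ p ∧ p ≤ 2*K)))
       ∨ (p = q+1 ∧ ((2 ≤ q ∧ q ≤ K-1) ∨ (K+3 ≤ q ∧ q ≤ 2*K)))) :
    ent K g z p q = -1 := by
  unfold ent
  rw [if_neg h0, if_neg h1, if_neg h2, if_neg h3, if_neg h4, if_neg h5, if_neg h6, if_pos h7]
lemma ent8 (h0 : ¬ p = q) (h1 : ¬(p = 1 ∧ q = 2)) (h2 : ¬(p = 2 ∧ q = 1))
    (h3 : ¬(p = 2*K+1 ∧ q = 2*K+2)) (h4 : ¬(p = 2*K+2 ∧ q = 2*K+1))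
    (h5 : ¬((p = K ∧ q = K+1) ∨ (p = K ∧ q = K+2)
       ∨ (p = K+3 ∧ q = K+1) ∨ (p = K+3 ∧ q = K+2)))
    (h6 : ¬((p = K+1 ∧ q = K) ∨ (p = K+2 ∧ q = K)
       ∨ (p = K+1 ∧ q = K+3) ∨ (p = K+2 ∧ q = K+3)))
    (h7 : ¬((q = p+1 ∧ ((2 ≤ p ∧ p ≤ K-1) ∨ (K+3 ≤ p ∧ p ≤ 2*K)))
       ∨ (p = q+1 ∧ ((2 ≤ q ∧ q ≤ K-1) ∨ (K+3 ≤ q ∧ q ≤ 2*K))))) :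
    ent K g z p q = 0 := by
  unfold ent
  rw [if_neg h0, if_neg h1, if_neg h2, if_neg h3, if_neg h4, if_neg h5, if_neg h6, if_neg h7]

end evals

set_option maxHeartbeats 1600000 in
theorem key (K : ℕ) (hK : 2 ≤ K) (g z : ℝ) (p q : ℕ) :
    dd K g z p * ent K g z p q = dd K g z q * ent K g z q p := by
  by_cases h0 : p = q
  · subst h0; rfl
  by_cases h1 : p = 1 ∧ q = 2
  · have E1 : ent K g z p q = -1-z := ent1 h0 h1
    have E2 : ent K g z q p = -1+z := ent2 (by omega) (by omega) (by omega)
    have D1 : dd K g z p = (1-z)*(1-g) := dd2 (by omega) (by omega)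
    have D2 : dd K g z q = (1-g)*(1+z) := dd3 (by omega) (by omega)
    rw [E1, E2, D1, D2]; try ring
  by_cases h2 : p = 2 ∧ q = 1
  · have E1 : ent K g z p q = -1+z := ent2 h0 h1 h2
    have E2 : ent K g z q p = -1-z := ent1 (by omega) (by omega)
    have D1 : dd K g z p = (1-g)*(1+z) := dd3 (by omega) (by omega)
    have D2 : dd K g z q = (1-z)*(1-g) := dd2 (by omega) (by omega)
    rw [E1, E2, D1, D2]; try ring
  by_cases h3 : p = 2*K+1 ∧ q = 2*K+2
  · have E1 : ent K g z p q = -1+z := ent3 h0 h1 h2 h3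
    have E2 : ent K g z q p = -1-z :=
      ent4 (by omega) (by omega) (by omega) (by omega) (by omega)
    have D1 : dd K g z p = (1-g)*(1+z) := dd3 (by omega) (by omega)
    have D2 : dd K g z q = (1-z)*(1-g) := dd2 (by omega) (by omega)
    rw [E1, E2, D1, D2]; try ring
  by_cases h4 : p = 2*K+2 ∧ q = 2*K+1
  · have E1 : ent K g z p q = -1-z := ent4 h0 h1 h2 h3 h4
    have E2 : ent K g z q p = -1+z := ent3 (by omega) (by omega) (by omega) (by omega)
    have D1 : dd K g z p = (1-z)*(1-g) := dd2 (by omega) (by omega)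
    have D2 : dd K g z q = (1-g)*(1+z) := dd3 (by omega) (by omega)
    rw [E1, E2, D1, D2]; try ring
  by_cases h5 : (p = K ∧ q = K+1) ∨ (p = K ∧ q = K+2)
       ∨ (p = K+3 ∧ q = K+1) ∨ (p = K+3 ∧ q = K+2)
  · have E1 : ent K g z p q = -1-g := ent5 h0 h1 h2 h3 h4 h5
    have E2 : ent K g z q p = -1+g :=
      ent6 (by omega) (by omega) (by omega) (by omega) (by omega) (by omega) (by omega)
    have D1 : dd K g z p = (1-g)*(1+z) := dd3 (by omega) (by omega)
    have D2 : dd K g z q = (1+g)*(1+z) := dd1 (by omega)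
    rw [E1, E2, D1, D2]; try ring
  by_cases h6 : (p = K+1 ∧ q = K) ∨ (p = K+2 ∧ q = K)
       ∨ (p = K+1 ∧ q = K+3) ∨ (p = K+2 ∧ q = K+3)
  · have E1 : ent K g z p q = -1+g := ent6 h0 h1 h2 h3 h4 h5 h6
    have E2 : ent K g z q p = -1-g :=
      ent5 (by omega) (by omega) (by omega) (by omega) (by omega) (by omega)
    have D1 : dd K g z p = (1+g)*(1+z) := dd1 (by omega)
    have D2 : dd K g z q = (1-g)*(1+z) := dd3 (by omega) (by omega)
    rw [E1, E2, D1, D2]; try ring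
  by_cases h7 : (q = p+1 ∧ ((2 ≤ p ∧ p ≤ K-1) ∨ (K+3 ≤ p ∧ p ≤ 2*K)))
       ∨ (p = q+1 ∧ ((2 ≤ q ∧ q ≤ K-1) ∨ (K+3 ≤ q ∧ q ≤ 2*K)))
  · have E1 : ent K g z p q = -1 := ent7 h0 h1 h2 h3 h4 h5 h6 h7
    have E2 : ent K g z q p = -1 :=
      ent7 (by omega) (by omega) (by omega) (by omega) (by omega) (by omega) (by omega)
        (by omega)
    have D1 : dd K g z p = (1-g)*(1+z) := dd3 (by omega) (by omega)
    have D2 : dd K g z q = (1-g)*(1+z) := dd3 (by omega) (by omega)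
    rw [E1, E2, D1, D2]; try ring
  · have E1 : ent K g z p q = 0 := ent8 h0 h1 h2 h3 h4 h5 h6 h7
    have h0' : ¬ q = p := fun h => h0 h.symm
    have h1' : ¬(q = 1 ∧ p = 2) := fun ⟨a,b⟩ => h2 ⟨b,a⟩
    have h2' : ¬(q = 2 ∧ p = 1) := fun ⟨a,b⟩ => h1 ⟨b,a⟩
    have h3' : ¬(q = 2*K+1 ∧ p = 2*K+2) := fun ⟨a,b⟩ => h4 ⟨b,a⟩
    have h4' : ¬(q = 2*K+2 ∧ p = 2*K+1) := fun ⟨a,b⟩ => h3 ⟨b,a⟩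
    have h5' : ¬((q = K ∧ p = K+1) ∨ (q = K ∧ p = K+2)
       ∨ (q = K+3 ∧ p = K+1) ∨ (q = K+3 ∧ p = K+2)) := by
      rintro (⟨a,b⟩|⟨a,b⟩|⟨a,b⟩|⟨a,b⟩)
      · exact h6 (Or.inl ⟨b,a⟩)
      · exact h6 (Or.inr (Or.inl ⟨b,a⟩))
      · exact h6 (Or.inr (Or.inr (Or.inl ⟨b,a⟩)))
      · exact h6 (Or.inr (Or.inr (Or.inr ⟨b,a⟩)))
    have h6' : ¬((q = K+1 ∧ p = K) ∨ (q = K+2 ∧ p = K)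
       ∨ (q = K+1 ∧ p = K+3) ∨ (q = K+2 ∧ p = K+3)) := by
      rintro (⟨a,b⟩|⟨a,b⟩|⟨a,b⟩|⟨a,b⟩)
      · exact h5 (Or.inl ⟨b,a⟩)
      · exact h5 (Or.inr (Or.inl ⟨b,a⟩))
      · exact h5 (Or.inr (Or.inr (Or.inl ⟨b,a⟩)))
      · exact h5 (Or.inr (Or.inr (Or.inr ⟨b,a⟩)))
    have h7' : ¬((p = q+1 ∧ ((2 ≤ q ∧ q ≤ K-1) ∨ (K+3 ≤ q ∧ q ≤ 2*K)))
       ∨ (q = p+1 ∧ ((2 ≤ p ∧ p ≤ K-1) ∨ (K+3 ≤ p ∧ p ≤ 2*K)))) :=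
      fun h => h7 (h.elim Or.inr Or.inl)
    have E2 : ent K g z q p = 0 := ent8 h0' h1' h2' h3' h4' h5' h6' h7'
    rw [E1, E2]; ring
open Matrix

theorem stmt14 (K : ℕ) (hK : 2 ≤ K) (g z : ℝ) (hg : |g| < 1) (hz : |z| < 1) :
    let H : Matrix (Fin (2*K+2)) (Fin (2*K+2)) ℝ := Matrix.of fun i j =>
      let p := (i : ℕ) + 1
      let q := (j : ℕ) + 1
      if p = q then (if p = K ∨ p = K+3 then 3 else 2)
      else if p = 1 ∧ q = 2 then -1-z
      else if p = 2 ∧ q = 1 then -1+z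
      else if p = 2*K+1 ∧ q = 2*K+2 then -1+z
      else if p = 2*K+2 ∧ q = 2*K+1 then -1-z
      else if (p = K ∧ q = K+1) ∨ (p = K ∧ q = K+2)
           ∨ (p = K+3 ∧ q = K+1) ∨ (p = K+3 ∧ q = K+2) then -1-g
      else if (p = K+1 ∧ q = K) ∨ (p = K+2 ∧ q = K)
           ∨ (p = K+1 ∧ q = K+3) ∨ (p = K+2 ∧ q = K+3) then -1+g
      else if (q = p+1 ∧ ((2 ≤ p ∧ p ≤ K-1) ∨ (K+3 ≤ p ∧ p ≤ 2*K)))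
           ∨ (p = q+1 ∧ ((2 ≤ q ∧ q ≤ K-1) ∨ (K+3 ≤ q ∧ q ≤ 2*K))) then -1
      else 0
    ∀ μ : ℂ, μ ∈ spectrum ℂ (H.map Complex.ofReal) → μ.im = 0 := by
  intro H μ hμ
  have hg' := abs_lt.mp hg
  have hz' := abs_lt.mp hz
  set Hc := H.map Complex.ofReal with hHc
  -- diagonal weights
  set d : Fin (2*K+2) → ℝ := fun i => dd K g z ((i : ℕ)+1) with hd
  have hdpos : ∀ i, 0 < d i := by
    intro i
    simp only [hd, dd]
    split_ifs <;> apply mul_pos <;> linarith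
  have hsym : ∀ i j, d i * H i j = d j * H j i := fun i j =>
    key K hK g z ((i : ℕ)+1) ((j : ℕ)+1)
  set e : Fin (2*K+2) → ℂ := fun i => ((Real.sqrt (d i) : ℝ) : ℂ) with he
  have he0 : ∀ i, e i ≠ 0 := fun i =>
    Complex.ofReal_ne_zero.mpr (ne_of_gt (Real.sqrt_pos.mpr (hdpos i)))
  have he2 : ∀ i, e i * e i = (d i : ℂ) := by
    intro i
    rw [he]
    rw [← Complex.ofReal_mul, Real.mul_self_sqrt (le_of_lt (hdpos i))]
  have hestar : ∀ i, star (e i) = e i := by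
    intro i
    simp [he, Complex.star_def, Complex.conj_ofReal]
  set S : Matrix (Fin (2*K+2)) (Fin (2*K+2)) ℂ :=
    Matrix.diagonal e * Hc * Matrix.diagonal (fun i => (e i)⁻¹) with hSdef
  have hSapp : ∀ i j, S i j = e i * Hc i j * (e j)⁻¹ := by
    intro i j
    rw [hSdef, Matrix.mul_diagonal, Matrix.diagonal_mul]
  have hHcR : ∀ i j, Hc i j = ((H i j : ℝ) : ℂ) := fun i j => rfl
  have hHerm : Sᴴ = S := by
    ext i j
    rw [Matrix.conjTranspose_apply, hSapp j i, hSapp i j]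
    have hstar : star (e j * Hc j i * (e i)⁻¹) = e j * Hc j i * (e i)⁻¹ := by
      rw [star_mul', star_mul', star_inv₀, hestar, hestar, hHcR, Complex.star_def,
        Complex.conj_ofReal]
      try ring
    rw [hstar]
    have hij : (d j : ℂ) * ((H j i : ℝ) : ℂ) = (d i : ℂ) * ((H i j : ℝ) : ℂ) := by
      rw [← Complex.ofReal_mul, ← Complex.ofReal_mul, hsym j i]
    rw [hHcR, hHcR]
    field_simp [he0 i, he0 j]
    linear_combination ((H j i : ℝ) : ℂ) * he2 j - ((H i j : ℝ) : ℂ) * he2 i + hij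
  -- determinant of the resolvent of S vanishes
  have hdet : (algebraMap ℂ (Matrix (Fin (2*K+2)) (Fin (2*K+2)) ℂ) μ - Hc).det = 0 := by
    have h := spectrum.mem_iff.mp hμ
    by_contra hne
    exact h ((Matrix.isUnit_iff_isUnit_det _).mpr (isUnit_iff_ne_zero.mpr hne))
  have hconj : algebraMap ℂ (Matrix (Fin (2*K+2)) (Fin (2*K+2)) ℂ) μ - S =
      Matrix.diagonal e * (algebraMap ℂ (Matrix (Fin (2*K+2)) (Fin (2*K+2)) ℂ) μ - Hc) *
        Matrix.diagonal (fun i => (e i)⁻¹) := by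
    have hone : Matrix.diagonal (fun i => e i * (e i)⁻¹) = (1 : Matrix (Fin (2*K+2)) (Fin (2*K+2)) ℂ) := by
      rw [show (fun i => e i * (e i)⁻¹) = fun _ : Fin (2*K+2) => (1:ℂ) from
        funext fun i => mul_inv_cancel₀ (he0 i), Matrix.diagonal_one]
    rw [Matrix.mul_sub, Matrix.sub_mul]
    congr 1
    rw [Algebra.algebraMap_eq_smul_one, Matrix.mul_smul, Matrix.mul_one, Matrix.smul_mul,
      Matrix.diagonal_mul_diagonal, hone]
  have hdetS : (algebraMap ℂ (Matrix (Fin (2*K+2)) (Fin (2*K+2)) ℂ) μ - S).det = 0 := by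
    rw [hconj, Matrix.det_mul, Matrix.det_mul, hdet, mul_zero, zero_mul]
  obtain ⟨v, hv0, hv⟩ := (Matrix.exists_mulVec_eq_zero_iff).mpr hdetS
  have hSv : S *ᵥ v = μ • v := by
    have h1 : algebraMap ℂ (Matrix (Fin (2*K+2)) (Fin (2*K+2)) ℂ) μ *ᵥ v = μ • v := by
      rw [Algebra.algebraMap_eq_smul_one, Matrix.smul_mulVec, Matrix.one_mulVec]
    rw [Matrix.sub_mulVec, h1, sub_eq_zero] at hv
    exact hv.symm
  set c : ℂ := star v ⬝ᵥ v with hc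
  have hcre : c = ((∑ i, Complex.normSq (v i) : ℝ) : ℂ) := by
    rw [hc]
    unfold dotProduct
    push_cast
    refine Finset.sum_congr rfl fun i _ => ?_
    rw [Complex.normSq_eq_conj_mul_self]
    rfl
  have hc0 : c ≠ 0 := by
    intro h
    rw [hcre] at h
    have hsum : (∑ i, Complex.normSq (v i) : ℝ) = 0 := by exact_mod_cast h
    have hall : ∀ i ∈ Finset.univ, Complex.normSq (v i) = 0 := by
      rw [← Finset.sum_eq_zero_iff_of_nonneg (fun i _ => Complex.normSq_nonneg (v i))]
      exact hsum
    apply hv0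
    funext i
    exact Complex.normSq_eq_zero.mp (hall i (Finset.mem_univ i))
  have hcstar : star c = c := by
    rw [hcre]
    exact Complex.conj_ofReal _
  have hX : star v ⬝ᵥ (S *ᵥ v) = μ * c := by
    rw [hSv, dotProduct_smul, smul_eq_mul, hc]
  have hXstar : star (star v ⬝ᵥ (S *ᵥ v)) = star v ⬝ᵥ (S *ᵥ v) := by
    conv_lhs => rw [Matrix.star_dotProduct]
    rw [Matrix.star_mulVec, hHerm, ← Matrix.dotProduct_mulVec]
    exact star_star _
  rw [hX, star_mul', hcstar] at hXstar
  have hμstar : star μ = μ := mul_right_cancel₀ hc0 hXstar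
  have : (starRingEnd ℂ) μ = μ := hμstar
  exact Complex.conj_eq_iff_im.mp this
end
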